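/- Let k be a field and let K be a finite simplicial complex of dimension ≥ 1 that is doubly Cohen–Macaulay over k. Then for every vertex v of K, the link lk_K(v) = {S ∈ K : v ∉ S, S ∪ {v} ∈ K} is doubly Cohen–Macaulay over k, of dimension dim K − 1. -/
import Mathlib


namespace Paper2CM

variable {V : Type*} [Fintype V] [LinearOrder V]

/-- `sign(t,T) = (−1)^{|{s ∈ T : s < t}|}`. -/
def signOf (t : V) (T : Finset V) : ℤ := (-1) ^ (T.filter (fun s => s < t)).card

/-- The simplicial boundary operator on formal chains with coefficients in an
abelian group `A`: `∂c(S) = Σ_{t ∉ S} sign(t, S ∪ {t}) • c(S ∪ {t})`. -/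
def bdry {A : Type*} [AddCommGroup A] (c : Finset V → A) : Finset V → A :=
  fun S => ∑ t ∈ Sᶜ, signOf t (insert t S) • c (insert t S)

/-- A chain of degree `n - 1`, i.e. supported on sets of cardinality `n`. -/
def IsSimpChain {A : Type*} [AddCommGroup A] (n : ℕ) (c : Finset V → A) : Prop :=
  ∀ T, c T ≠ 0 → T.card = n

/-- `c'` is a subchain of `c`: each coefficient of `c'` agrees with that of `c` or is `0`. -/
def Subchain {A : Type*} [AddCommGroup A] (c' c : Finset V → A) : Prop :=
  ∀ T, c' T = c T ∨ c' T = 0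

/-- A minimal cycle supported on sets of cardinality `n` (so of dimension `n - 1`):
a nonzero cycle whose only subchains that are cycles are `0` and itself. -/
def IsMinimalCycle {A : Type*} [AddCommGroup A] (n : ℕ) (c : Finset V → A) : Prop :=
  c ≠ 0 ∧ IsSimpChain n c ∧ bdry c = 0 ∧
    ∀ c', Subchain c' c → bdry c' = 0 → c' = 0 ∨ c' = c

/-- The simplicial complex spanned by the support of a chain. -/
def spannedComplex {A : Type*} [AddCommGroup A] (c : Finset V → A) : Set (Finset V) :=
  {S | ∃ T, c T ≠ 0 ∧ S ⊆ T}

/-- A (finite) simplicial complex on vertex type `V`: a collection of finite subsets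
closed under taking subsets, containing the empty set. -/
def IsComplex (K : Set (Finset V)) : Prop :=
  ∅ ∈ K ∧ ∀ S ∈ K, ∀ T, T ⊆ S → T ∈ K

/-- The link of a face: `lk_L(T) = {S ∈ L : S ∩ T = ∅, S ∪ T ∈ L}`. -/
def cxLink (L : Set (Finset V)) (T : Finset V) : Set (Finset V) :=
  {S | S ∈ L ∧ Disjoint S T ∧ S ∪ T ∈ L}

/-- A pure complex: every face is contained in a face of maximal cardinality. -/
def IsPure (L : Set (Finset V)) : Prop :=
  ∀ S ∈ L, ∃ F ∈ L, S ⊆ F ∧ ∀ G ∈ L, G.card ≤ F.card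

/-- A chain of the complex `L` supported on faces of `L` of cardinality `n`. -/
def IsChainOn (k : Type*) [Field k] (L : Set (Finset V)) (n : ℕ) (c : Finset V → k) : Prop :=
  ∀ T, c T ≠ 0 → T ∈ L ∧ T.card = n

/-- Vanishing of the reduced homology `H̃_{n-1}(L; k)`: every cycle supported on
cardinality-`n` faces of `L` is the boundary of a chain on cardinality-`(n+1)` faces of `L`. -/
def HomologyVanishes (k : Type*) [Field k] (L : Set (Finset V)) (n : ℕ) : Prop :=
  ∀ c : Finset V → k, IsChainOn k L n c → bdry c = 0 →
    ∃ b : Finset V → k, IsChainOn k L (n + 1) b ∧ bdry b = c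

/-- Cohen–Macaulay over `k` via Reisner's criterion: `L` is pure and for every face
`T ∈ L` and every `i < dim lk_L(T)`, `H̃_i(lk_L(T); k) = 0` (here `i = n - 1`, and
`i < dim lk_L(T)` is expressed as: the link has a face of cardinality `> n`). -/
def IsCM (k : Type*) [Field k] (L : Set (Finset V)) : Prop :=
  IsPure L ∧ ∀ T ∈ L, ∀ n : ℕ, (∃ F ∈ cxLink L T, n < F.card) →
    HomologyVanishes k (cxLink L T) n

/-- Doubly Cohen–Macaulay over `k`: `K` is CM and for every vertex `v` of `K`,
`K − v` is CM of the same dimension as `K` (same maximal cardinality of a face). -/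
def Is2CM (k : Type*) [Field k] (K : Set (Finset V)) : Prop :=
  IsCM k K ∧ ∀ v : V, ({v} : Finset V) ∈ K →
    IsCM k {S | S ∈ K ∧ v ∉ S} ∧
    ∀ S ∈ K, ∃ F ∈ K, v ∉ F ∧ S.card ≤ F.card

/-- Link of a link is a link. -/
lemma link_link {K : Set (Finset V)} (hK : IsComplex K) (T S : Finset V)
    (hST : Disjoint S T) :
    cxLink (cxLink K T) S = cxLink K (S ∪ T) := by
  ext X
  simp only [cxLink, Set.mem_setOf_eq]
  constructor
  · rintro ⟨⟨hX, hXT, _⟩, hXS, ⟨_, _, hXST⟩⟩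
    refine ⟨hX, ?_, by rwa [← Finset.union_assoc]⟩
    exact Finset.disjoint_union_right.mpr ⟨hXS, hXT⟩
  · rintro ⟨hX, hXST, hU⟩
    have hXS : Disjoint X S := (Finset.disjoint_union_right.mp hXST).1
    have hXT : Disjoint X T := (Finset.disjoint_union_right.mp hXST).2
    have hU' : (X ∪ S) ∪ T ∈ K := by rwa [Finset.union_assoc]
    refine ⟨⟨hX, hXT, hK.2 _ hU' _ ?_⟩, hXS,
      ⟨hK.2 _ hU' _ Finset.subset_union_left,
       Finset.disjoint_union_left.mpr ⟨hXT, hST⟩, hU'⟩⟩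
    intro x hx
    simp only [Finset.mem_union] at hx ⊢
    tauto

/-- The link of any face of a pure complex is pure. -/
lemma link_pure {L : Set (Finset V)} (hL : IsComplex L) (hp : IsPure L)
    (T : Finset V) : IsPure (cxLink L T) := by
  rintro S ⟨hSL, hST, hSTL⟩
  obtain ⟨F, hF, hsub, hmax⟩ := hp (S ∪ T) hSTL
  have hTF : T ⊆ F := (Finset.union_subset_iff.mp hsub).2
  refine ⟨F \ T, ⟨hL.2 F hF _ (Finset.sdiff_subset), Finset.sdiff_disjoint,
      by rwa [Finset.sdiff_union_of_subset hTF]⟩, ?_, ?_⟩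
  · exact Finset.subset_sdiff.mpr ⟨(Finset.union_subset_iff.mp hsub).1, hST⟩
  · rintro G ⟨hGL, hGT, hGTL⟩
    have h1 : G.card + T.card ≤ F.card := by
      rw [← Finset.card_union_of_disjoint hGT]; exact hmax _ hGTL
    have h2 : (F \ T).card = F.card - T.card := Finset.card_sdiff_of_subset hTF
    have h3 : T.card ≤ F.card := Finset.card_le_card hTF
    omega

/-- The link of any face of a CM complex is CM. -/
lemma link_CM (k : Type*) [Field k] {L : Set (Finset V)} (hL : IsComplex L)
    (hcm : IsCM k L) {T : Finset V} (hT : T ∈ L) : IsCM k (cxLink L T) := by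
  refine ⟨link_pure hL hcm.1 T, ?_⟩
  rintro T' ⟨hT'L, hT'T, hT'TL⟩ n hn
  rw [link_link hL T T' hT'T] at hn ⊢
  exact hcm.2 (T' ∪ T) hT'TL n hn

/-- If `K` is doubly Cohen–Macaulay over `k` of dimension
`d ≥ 1` (faces have cardinality `≤ d + 1`, with a face of cardinality `d + 1`),
then for every vertex `v` of `K` the link `lk_K(v)` is doubly Cohen–Macaulay over
`k` of dimension `d − 1` (faces have cardinality `≤ d`, with one of cardinality `d`). -/
theorem link_of_2CM_is_2CM
    {V : Type*} [Fintype V] [LinearOrder V] (k : Type*) [Field k]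
    (d : ℕ) (hd : 1 ≤ d) (K : Set (Finset V))
    (hK : IsComplex K)
    (hdim : (∀ S ∈ K, S.card ≤ d + 1) ∧ ∃ S ∈ K, S.card = d + 1)
    (h2cm : Is2CM k K)
    (v : V) (hv : ({v} : Finset V) ∈ K) :
    Is2CM k (cxLink K {v}) ∧
    (∀ S ∈ cxLink K {v}, S.card ≤ d) ∧
    ∃ S ∈ cxLink K {v}, S.card = d := by
  obtain ⟨hKcm, hKdel⟩ := h2cm
  obtain ⟨hdim1, S0, hS0, hS0card⟩ := hdim
  -- every face of the link has cardinality ≤ d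
  have hlink_le : ∀ S ∈ cxLink K {v}, S.card ≤ d := by
    rintro S ⟨hS, hSv, hSvK⟩
    have := hdim1 _ hSvK
    rw [Finset.card_union_of_disjoint hSv, Finset.card_singleton] at this
    omega
  -- a top face of the link
  have hlink_top : ∃ S ∈ cxLink K {v}, S.card = d := by
    obtain ⟨F, hF, hvF, hFmax⟩ := hKcm.1 {v} hv
    have hFcard : F.card = d + 1 :=
      le_antisymm (hdim1 F hF) (hS0card ▸ hFmax S0 hS0)
    have hvF' : v ∈ F := hvF (Finset.mem_singleton_self v)
    have hsub : ({v} : Finset V) ⊆ F := hvF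
    refine ⟨F \ {v}, ⟨hK.2 F hF _ (Finset.sdiff_subset), Finset.sdiff_disjoint,
        by rwa [Finset.sdiff_union_of_subset hsub]⟩, ?_⟩
    rw [Finset.card_sdiff_of_subset hsub, Finset.card_singleton, hFcard]
    omega
  refine ⟨⟨link_CM k hK hKcm hv, ?_⟩, hlink_le, hlink_top⟩
  -- the 2-CM condition for the link
  rintro w ⟨hwK, hwv, hwvK⟩
  have hwnev : w ≠ v := by
    intro h; subst h
    exact (Finset.disjoint_singleton.mp hwv) rfl
  obtain ⟨hKwCM, hKwbig⟩ := hKdel w hwK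
  -- K − w is a complex
  have hKwcx : IsComplex {S | S ∈ K ∧ w ∉ S} := by
    refine ⟨⟨hK.1, by simp⟩, ?_⟩
    rintro S ⟨hS, hwS⟩ T hTS
    exact ⟨hK.2 S hS T hTS, fun h => hwS (hTS h)⟩
  have hvKw : ({v} : Finset V) ∈ {S | S ∈ K ∧ w ∉ S} := by
    refine ⟨hv, ?_⟩
    simpa using hwnev
  -- (deleted link) = (link of v in K − w)
  have hset : {S | S ∈ cxLink K {v} ∧ w ∉ S}
      = cxLink {S | S ∈ K ∧ w ∉ S} {v} := by
    ext S
    simp only [cxLink, Set.mem_setOf_eq, Finset.mem_union, Finset.mem_singleton]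
    constructor
    · rintro ⟨⟨hS, hSv, hSvK⟩, hwS⟩
      exact ⟨⟨hS, hwS⟩, hSv, hSvK, by rintro (h | h); exacts [hwS h, hwnev h]⟩
    · rintro ⟨⟨hS, hwS⟩, hSv, hSvK, _⟩
      exact ⟨⟨hS, hSv, hSvK⟩, hwS⟩
  constructor
  · rw [hset]
    exact link_CM k hKwcx hKwCM hvKw
  · -- every face of the link has card ≤ some face of the link avoiding w
    intro S hS
    -- K − w has a face of cardinality d + 1
    obtain ⟨F2, hF2, hwF2, hF2card⟩ := hKwbig S0 hS0
    -- a maximal face of K − w containing {v}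
    obtain ⟨F1, hF1, hvF1, hF1max⟩ := hKwCM.1 {v} hvKw
    have hF1card : F1.card = d + 1 := by
      have h1 : F1.card ≤ d + 1 := hdim1 F1 hF1.1
      have h2 : d + 1 ≤ F2.card := hS0card ▸ hF2card
      have h3 : F2.card ≤ F1.card := hF1max F2 ⟨hF2, hwF2⟩
      omega
    have hsub : ({v} : Finset V) ⊆ F1 := hvF1
    refine ⟨F1 \ {v}, ⟨hK.2 F1 hF1.1 _ (Finset.sdiff_subset), Finset.sdiff_disjoint,
        by rw [Finset.sdiff_union_of_subset hsub]; exact hF1.1⟩, ?_, ?_⟩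
    · intro h
      exact hF1.2 ((Finset.mem_sdiff.mp h).1)
    · have : (F1 \ {v}).card = d := by
        rw [Finset.card_sdiff_of_subset hsub, Finset.card_singleton, hF1card]
        omega
      rw [this]
      exact hlink_le S hS

end Paper2CM
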